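/- For real α > 0, 1 < β < 2, and T' > T ≥ 1, there exists a constant C (depending only on α, β) such that ∫_T^{T'} e^{-αt} t^β (t−T) dt ≤ C (e^{-αT'} (T')^{β+1} + e^{-αT} T^β). -/

import Mathlib

open MeasureTheory Real Set

theorem stmt_1 (α β : ℝ) (hα : 0 < α) (hβ1 : 1 < β) (hβ2 : β < 2) :
    ∃ C : ℝ, ∀ T T' : ℝ, 1 ≤ T → T < T' →
      (∫ t in T..T', Real.exp (-α * t) * t ^ β * (t - T)) ≤
        C * (Real.exp (-α * T') * T' ^ (β + 1) + Real.exp (-α * T) * T ^ β) := by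
  set g : ℝ → ℝ := fun s => Real.exp (-α * s) * (s * (1 + s) ^ 2) with hg
  have hgcont : Continuous g := by fun_prop
  have hgnonneg : ∀ s : ℝ, 0 ≤ s → 0 ≤ g s := fun s hs => by
    have := Real.exp_pos (-α * s)
    have : (0:ℝ) ≤ (1 + s) ^ 2 := sq_nonneg _
    positivity
  -- integrability of g on Ioi 0
  have hmaj : IntegrableOn (fun x : ℝ => 4 * Real.exp (-α * x) +
      4 * (x ^ (3:ℝ) * Real.exp (-α * x))) (Ioi 0) := by
    apply Integrable.add
    · exact (exp_neg_integrableOn_Ioi 0 hα).const_mul 4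
    · have h := integrableOn_rpow_mul_exp_neg_mul_rpow
        (p := 1) (by norm_num : (-1:ℝ) < 3) one_pos hα
      have h2 : IntegrableOn (fun x : ℝ => x ^ (3:ℝ) * Real.exp (-α * x)) (Ioi 0) := by
        refine h.congr_fun (fun x hx => ?_) measurableSet_Ioi
        simp only [Real.rpow_one]
      exact h2.const_mul 4
  have hgint : IntegrableOn g (Ioi 0) := by
    apply hmaj.mono' (hgcont.aestronglyMeasurable.restrict)
    filter_upwards [ae_restrict_mem measurableSet_Ioi] with x hx
    have hx0 : (0:ℝ) < x := hx
    have hex : (0:ℝ) < Real.exp (-α * x) := Real.exp_pos _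
    have hx3 : x ^ (3:ℝ) = x ^ 3 := by
      rw [show (3:ℝ) = ((3:ℕ):ℝ) by norm_num, Real.rpow_natCast]
    rw [Real.norm_eq_abs, abs_of_nonneg (hgnonneg x hx0.le), hg]
    simp only [hx3]
    nlinarith [sq_nonneg x, sq_nonneg (x - 1), mul_pos hx0 hex, sq_nonneg (x*(x-1))]
  set I := ∫ s in Ioi (0:ℝ), g s with hI
  have hInn : 0 ≤ I := setIntegral_nonneg measurableSet_Ioi fun s hs => hgnonneg s (le_of_lt hs)
  refine ⟨I, fun T T' hT hTT' => ?_⟩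
  have hT0 : (0:ℝ) < T := lt_of_lt_of_le one_pos hT
  -- pointwise bound
  have hpt : ∀ t ∈ Icc T T', Real.exp (-α * t) * t ^ β * (t - T) ≤
      Real.exp (-α * T) * T ^ β * g (t - T) := by
    intro t ht
    obtain ⟨ht1, ht2⟩ := ht
    have ht0 : (0:ℝ) < t := lt_of_lt_of_le hT0 ht1
    have hs0 : (0:ℝ) ≤ t - T := by linarith
    have hexp : Real.exp (-α * t) = Real.exp (-α * T) * Real.exp (-α * (t - T)) := by
      rw [← Real.exp_add]; ring_nf
    have htb : t ^ β ≤ T ^ β * (1 + (t - T)) ^ 2 := by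
      have h1 : t ^ β = t ^ (β - 2) * t ^ (2:ℝ) := by
        rw [← Real.rpow_add ht0]; ring_nf
      have h2 : t ^ (β - 2) ≤ T ^ (β - 2) :=
        Real.rpow_le_rpow_of_nonpos hT0 ht1 (by linarith)
      have h3 : t ^ (2:ℝ) = t ^ 2 := by
        rw [show (2:ℝ) = ((2:ℕ):ℝ) by norm_num, Real.rpow_natCast]
      have h4 : t ^ 2 ≤ T ^ 2 * (1 + (t - T)) ^ 2 := by
        have : t ≤ T * (1 + (t - T)) := by nlinarith
        calc t ^ 2 ≤ (T * (1 + (t - T))) ^ 2 := by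
              apply sq_le_sq' <;> nlinarith
          _ = T ^ 2 * (1 + (t - T)) ^ 2 := by ring
      have h5 : T ^ (β - 2) * T ^ 2 = T ^ β := by
        rw [show (T:ℝ) ^ 2 = T ^ ((2:ℕ):ℝ) by rw [Real.rpow_natCast],
          ← Real.rpow_add hT0]
        norm_num
      calc t ^ β = t ^ (β - 2) * t ^ 2 := by rw [h1, h3]
        _ ≤ T ^ (β - 2) * (T ^ 2 * (1 + (t - T)) ^ 2) := by
            apply mul_le_mul h2 h4 (by positivity) (by positivity)
        _ = T ^ β * (1 + (t - T)) ^ 2 := by rw [← mul_assoc, h5]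
    have hTb : (0:ℝ) < T ^ β := Real.rpow_pos_of_pos hT0 β
    have hexs : (0:ℝ) < Real.exp (-α * (t - T)) := Real.exp_pos _
    calc Real.exp (-α * t) * t ^ β * (t - T)
        ≤ Real.exp (-α * t) * (T ^ β * (1 + (t - T)) ^ 2) * (t - T) := by
          apply mul_le_mul_of_nonneg_right _ hs0
          exact mul_le_mul_of_nonneg_left htb (Real.exp_pos _).le
      _ = Real.exp (-α * T) * T ^ β * g (t - T) := by rw [hexp, hg]; ring
  -- interval integrability
  have huIcc : uIcc T T' = Icc T T' := uIcc_of_le hTT'.le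
  have hcont1 : ContinuousOn (fun t : ℝ => Real.exp (-α * t) * t ^ β * (t - T)) (uIcc T T') := by
    apply ContinuousOn.mul
    apply ContinuousOn.mul
    · exact (by fun_prop : Continuous fun t : ℝ => Real.exp (-α * t)).continuousOn
    · intro x hx
      rw [huIcc] at hx
      have hx0 : x ≠ 0 := ne_of_gt (lt_of_lt_of_le hT0 hx.1)
      exact (Real.continuousAt_rpow_const x β (Or.inl hx0)).continuousWithinAt
    · exact (by fun_prop : Continuous fun t : ℝ => t - T).continuousOn
  have hint1 : IntervalIntegrable (fun t : ℝ => Real.exp (-α * t) * t ^ β * (t - T))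
      volume T T' := hcont1.intervalIntegrable
  have hint2 : IntervalIntegrable (fun t : ℝ => Real.exp (-α * T) * T ^ β * g (t - T))
      volume T T' :=
    ((continuous_const.mul (hgcont.comp (by fun_prop : Continuous fun t : ℝ => t - T))).intervalIntegrable T T')
  have h1 : (∫ t in T..T', Real.exp (-α * t) * t ^ β * (t - T)) ≤
      ∫ t in T..T', Real.exp (-α * T) * T ^ β * g (t - T) :=
    intervalIntegral.integral_mono_on hTT'.le hint1 hint2 hpt
  have h2 : (∫ t in T..T', Real.exp (-α * T) * T ^ β * g (t - T)) =
      Real.exp (-α * T) * T ^ β * ∫ s in (0:ℝ)..(T' - T), g s := by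
    rw [intervalIntegral.integral_const_mul, intervalIntegral.integral_comp_sub_right g T,
      sub_self]
  have h3 : (∫ s in (0:ℝ)..(T' - T), g s) ≤ I := by
    rw [intervalIntegral.integral_of_le (by linarith : (0:ℝ) ≤ T' - T), hI]
    apply setIntegral_mono_set hgint
    · filter_upwards [ae_restrict_mem measurableSet_Ioi] with x hx
      exact hgnonneg x (le_of_lt hx)
    · exact Filter.Eventually.of_forall fun x hx => hx.1
  have hTb : (0:ℝ) ≤ T ^ β := (Real.rpow_pos_of_pos hT0 β).le
  have hA : (0:ℝ) ≤ Real.exp (-α * T') * T' ^ (β + 1) := by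
    have : (0:ℝ) < T' := lt_trans hT0 hTT'
    positivity
  have hexT : (0:ℝ) ≤ Real.exp (-α * T) := (Real.exp_pos _).le
  calc (∫ t in T..T', Real.exp (-α * t) * t ^ β * (t - T))
      ≤ Real.exp (-α * T) * T ^ β * ∫ s in (0:ℝ)..(T' - T), g s := by rw [← h2]; exact h1
    _ ≤ Real.exp (-α * T) * T ^ β * I := by
        apply mul_le_mul_of_nonneg_left h3 (by positivity)
    _ ≤ I * (Real.exp (-α * T') * T' ^ (β + 1) + Real.exp (-α * T) * T ^ β) := by
        nlinarith [mul_nonneg hexT hTb]
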